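/- Let Ω ⊆ ℝ^{n+1} contain (0,…,0,1) with I(Ω) := ⋂_{(α,β)∈Ω} {x : α·x ≤ β} nonempty. Then there exists a finite subset Ω̄ ⊆ Ω with I(Ω̄) = I(Ω) if and only if there exists a finite subset Ω̄ ⊆ Ω with cone(Ω̄) = cl cone(Ω). -/

import Mathlib

/-- The conical hull of a set: all finite nonnegative combinations. -/
def conicalHull {E : Type*} [AddCommMonoid E] [Module ℝ E] (s : Set E) : Set E :=
  {x | ∃ (k : ℕ) (c : Fin k → ℝ) (v : Fin k → E),
    (∀ i, 0 ≤ c i) ∧ (∀ i, v i ∈ s) ∧ x = ∑ i, c i • v i}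

open scoped InnerProductSpace

namespace ConeAux

section Basic
variable {E F : Type*} [AddCommMonoid E] [Module ℝ E] [AddCommMonoid F] [Module ℝ F]

lemma subset_conicalHull (s : Set E) : s ⊆ conicalHull s := fun x hx =>
  ⟨1, fun _ => 1, fun _ => x, fun _ => zero_le_one, fun _ => hx, by simp⟩

lemma zero_mem_conicalHull (s : Set E) : 0 ∈ conicalHull s :=
  ⟨0, Fin.elim0, Fin.elim0, fun i => i.elim0, fun i => i.elim0, by simp⟩

/-- `conicalHull s` as a convex cone. -/
def coneOf (s : Set E) : ConvexCone ℝ E where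
  carrier := conicalHull s
  smul_mem' := by
    rintro t ht x ⟨k, c, v, hc, hv, rfl⟩
    refine ⟨k, fun i => t * c i, v, fun i => mul_nonneg (le_of_lt ht) (hc i), hv, ?_⟩
    rw [Finset.smul_sum]; simp [smul_smul]
  add_mem' := by
    rintro x ⟨k, c, v, hc, hv, rfl⟩ y ⟨l, d, w, hd, hw, rfl⟩
    refine ⟨k + l, Fin.append c d, Fin.append v w, ?_, ?_, ?_⟩
    · intro i
      refine Fin.addCases (fun j => ?_) (fun j => ?_) i <;>
        simp [Fin.append_left, Fin.append_right, hc _, hd _]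
    · intro i
      refine Fin.addCases (fun j => ?_) (fun j => ?_) i <;>
        simp [Fin.append_left, Fin.append_right, hv _, hw _]
    · rw [Fin.sum_univ_add]
      simp [Fin.append_left, Fin.append_right]

lemma image_conicalHull_subset (f : E →ₗ[ℝ] F) (s : Set E) :
    f '' conicalHull s ⊆ conicalHull (f '' s) := by
  rintro _ ⟨x, ⟨k, c, v, hc, hv, rfl⟩, rfl⟩
  exact ⟨k, c, fun i => f (v i), hc, fun i => Set.mem_image_of_mem f (hv i),
    by rw [map_sum]; simp⟩

lemma conicalHull_image (e : E ≃ₗ[ℝ] F) (s : Set E) :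
    conicalHull (e '' s) = e '' conicalHull s := by
  apply Set.Subset.antisymm
  · intro x hx
    have h1 : e.symm x ∈ e.symm '' conicalHull (e '' s) := Set.mem_image_of_mem _ hx
    have h2 := image_conicalHull_subset (e.symm : F →ₗ[ℝ] E) (e '' s) h1
    have h3 : (e.symm : F →ₗ[ℝ] E) '' (e '' s) = s := by
      rw [← Set.image_comp]; simp
    rw [h3] at h2
    exact ⟨e.symm x, h2, by simp⟩
  · exact image_conicalHull_subset (e : E →ₗ[ℝ] F) s

end Basic

section Carath
variable {E : Type*} [AddCommGroup E] [Module ℝ E]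

/-- Carathéodory step: any nonnegative combination is a nonneg combination of a
linearly independent subfamily. -/
lemma carath : ∀ (k : ℕ) (c : Fin k → ℝ) (v : Fin k → E), (∀ i, 0 ≤ c i) →
    ∃ (m : ℕ) (d : Fin m → ℝ) (w : Fin m → E), (∀ j, 0 ≤ d j) ∧
      (∀ j, w j ∈ Set.range v) ∧ LinearIndependent ℝ w ∧
      ∑ i, c i • v i = ∑ j, d j • w j := by
  intro k
  induction k with
  | zero =>
      intro c v hc
      exact ⟨0, Fin.elim0, Fin.elim0, fun j => j.elim0, fun j => j.elim0,
        linearIndependent_empty_type, by simp⟩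
  | succ k ih =>
      intro c v hc
      by_cases hind : LinearIndependent ℝ v
      · exact ⟨k + 1, c, v, hc, fun j => ⟨j, rfl⟩, hind, rfl⟩
      · obtain ⟨g, hgsum, i₁, hgi⟩ := Fintype.not_linearIndependent_iff.mp hind
        obtain ⟨g, hgsum, i₂, hgpos⟩ :
            ∃ g : Fin (k+1) → ℝ, ∑ i, g i • v i = 0 ∧ ∃ i, 0 < g i := by
          rcases lt_or_ge 0 (g i₁) with h | h
          · exact ⟨g, hgsum, i₁, h⟩
          · refine ⟨-g, by simpa using hgsum, i₁, ?_⟩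
            simpa using lt_of_le_of_ne h hgi
        classical
        set P : Finset (Fin (k+1)) := Finset.univ.filter (fun i => 0 < g i) with hP
        have hPne : P.Nonempty := ⟨i₂, by simp [hP, hgpos]⟩
        obtain ⟨i₀, hi₀P, hi₀min⟩ := P.exists_min_image (fun i => c i / g i) hPne
        have hgi₀ : 0 < g i₀ := by simpa [hP] using hi₀P
        set t : ℝ := c i₀ / g i₀ with ht
        have htnn : 0 ≤ t := div_nonneg (hc i₀) hgi₀.le
        set c' : Fin (k+1) → ℝ := fun i => c i - t * g i with hc'
        have hc'nn : ∀ i, 0 ≤ c' i := by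
          intro i
          by_cases hgi : 0 < g i
          · have hle := hi₀min i (by simp [hP, hgi])
            have h2 : t * g i ≤ c i := by
              rw [ht]
              calc c i₀ / g i₀ * g i ≤ c i / g i * g i :=
                    mul_le_mul_of_nonneg_right hle hgi.le
                _ = c i := div_mul_cancel₀ _ (ne_of_gt hgi)
            simp only [hc']
            linarith
          · push_neg at hgi
            have : t * g i ≤ 0 := mul_nonpos_of_nonneg_of_nonpos htnn hgi
            simp only [hc']
            linarith [hc i]
        have hci₀ : c' i₀ = 0 := by
          simp [hc', ht, div_mul_cancel₀ _ (ne_of_gt hgi₀)]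
        have hsum : ∑ i, c' i • v i = ∑ i, c i • v i := by
          simp only [hc', sub_smul, mul_smul, Finset.sum_sub_distrib, ← Finset.smul_sum, hgsum,
            smul_zero, sub_zero]
        obtain ⟨m, d, w, hd, hw, hwind, heq⟩ :=
          ih (fun j => c' (i₀.succAbove j)) (fun j => v (i₀.succAbove j)) (fun j => hc'nn _)
        refine ⟨m, d, w, hd, ?_, hwind, ?_⟩
        · intro j
          obtain ⟨i, hi⟩ := hw j
          exact ⟨i₀.succAbove i, hi⟩
        · rw [← hsum, Fin.sum_univ_succAbove (fun i => c' i • v i) i₀, hci₀, zero_smul, zero_add,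
            heq]

end Carath

section Closed
variable {E : Type*} [NormedAddCommGroup E] [NormedSpace ℝ E]

/-- The cone generated by a finite linearly independent set is closed. -/
lemma isClosed_conicalHull_of_linearIndependent {t : Set E} (htf : t.Finite)
    (hind : LinearIndependent ℝ ((↑) : t → E)) : IsClosed (conicalHull t) := by
  classical
  have : Fintype t := htf.fintype
  set k := Fintype.card t with hk
  set e : Fin k ≃ t := (Fintype.equivFin t).symm with he
  set v : Fin k → E := fun i => ↑(e i) with hv
  have hvind : LinearIndependent ℝ v := hind.comp e e.injective
  have hvt : ∀ i, v i ∈ t := fun i => (e i).2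
  set L : (Fin k → ℝ) →ₗ[ℝ] E :=
    { toFun := fun d => ∑ j, d j • v j
      map_add' := by intro a b; simp [add_smul, Finset.sum_add_distrib]
      map_smul' := by intro r a; simp [smul_smul, Finset.smul_sum] } with hL
  have hinj : Function.Injective L := by
    rw [← LinearMap.ker_eq_bot, LinearMap.ker_eq_bot']
    intro d hd
    funext j
    exact Fintype.linearIndependent_iff.mp hvind d hd j
  have himg : conicalHull t = L '' {d : Fin k → ℝ | ∀ j, 0 ≤ d j} := by
    apply Set.Subset.antisymm
    · rintro x ⟨m, c, w, hc, hw, rfl⟩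
      set g : Fin m → Fin k := fun i => e.symm ⟨w i, hw i⟩ with hg
      have hwg : ∀ i, v (g i) = w i := by intro i; simp [hv, hg]
      refine ⟨fun j => ∑ i ∈ Finset.univ.filter (fun i => g i = j), c i,
        fun j => Finset.sum_nonneg fun i _ => hc i, ?_⟩
      show ∑ j, (∑ i ∈ Finset.univ.filter (fun i => g i = j), c i) • v j = _
      calc ∑ j, (∑ i ∈ Finset.univ.filter (fun i => g i = j), c i) • v j
          = ∑ j, ∑ i ∈ Finset.univ.filter (fun i => g i = j), c i • v j := by
            simp [Finset.sum_smul]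
        _ = ∑ j, ∑ i ∈ Finset.univ.filter (fun i => g i = j), c i • w i := by
            refine Finset.sum_congr rfl fun j _ => Finset.sum_congr rfl fun i hi => ?_
            rw [← hwg i, (Finset.mem_filter.mp hi).2]
        _ = ∑ i, c i • w i := Finset.sum_fiberwise _ _ _
    · rintro _ ⟨d, hd, rfl⟩
      exact ⟨k, d, v, hd, hvt, rfl⟩
  rw [himg]
  have hclosed : IsClosed {d : Fin k → ℝ | ∀ j, 0 ≤ d j} := by
    have : {d : Fin k → ℝ | ∀ j, 0 ≤ d j} = ⋂ j, (fun d : Fin k → ℝ => d j) ⁻¹' Set.Ici 0 := by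
      ext d; simp [Set.mem_iInter]
    rw [this]
    exact isClosed_iInter fun j => isClosed_Ici.preimage (continuous_apply j)
  have hker : LinearMap.ker L = ⊥ := LinearMap.ker_eq_bot.mpr hinj
  exact (L.isClosedEmbedding_of_injective hker).isClosedMap _ hclosed

/-- The cone generated by a finite set is closed. -/
lemma isClosed_conicalHull {s : Set E} (hs : s.Finite) : IsClosed (conicalHull s) := by
  classical
  have hunion : conicalHull s =
      ⋃ t ∈ {t : Set E | t ⊆ s ∧ LinearIndependent ℝ ((↑) : t → E)}, conicalHull t := by
    apply Set.Subset.antisymm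
    · rintro x ⟨m, c, v, hc, hv, rfl⟩
      obtain ⟨m', d, w, hd, hw, hwind, heq⟩ := carath m c v hc
      have hrs : Set.range w ⊆ s := by
        rintro y ⟨j, rfl⟩
        obtain ⟨i, hi⟩ := hw j
        exact hi ▸ hv i
      have hmem : (∑ i, c i • v i) ∈ conicalHull (Set.range w) :=
        ⟨m', d, w, hd, fun j => ⟨j, rfl⟩, heq⟩
      exact Set.mem_biUnion ⟨hrs, hwind.linearIndepOn_id⟩ hmem
    · refine Set.iUnion₂_subset fun t ht => ?_
      rintro x ⟨m, c, v, hc, hv, rfl⟩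
      exact ⟨m, c, v, hc, fun i => ht.1 (hv i), rfl⟩
  rw [hunion]
  have hfin : {t : Set E | t ⊆ s ∧ LinearIndependent ℝ ((↑) : t → E)}.Finite :=
    hs.finite_subsets.subset fun t ht => ht.1
  refine hfin.isClosed_biUnion fun t ht => ?_
  exact isClosed_conicalHull_of_linearIndependent (hs.subset ht.1) ht.2

end Closed

section Dual
variable {H : Type*} [NormedAddCommGroup H] [InnerProductSpace ℝ H]

/-- The inner dual cone of a set, as a set. -/
def _root_.Set.innerDualCone (s : Set H) : Set H := {y | ∀ x ∈ s, 0 ≤ ⟪x, y⟫_ℝ}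

@[simp] lemma mem_innerDualCone (s : Set H) (y : H) :
    y ∈ s.innerDualCone ↔ ∀ x ∈ s, 0 ≤ ⟪x, y⟫_ℝ := Iff.rfl

lemma innerDualCone_conicalHull (A : Set H) :
    (conicalHull A).innerDualCone = A.innerDualCone := by
  apply le_antisymm
  · exact fun y hy x hx => hy x (subset_conicalHull A hx)
  · intro y hy
    rintro x ⟨k, c, v, hc, hv, rfl⟩
    rw [sum_inner]
    refine Finset.sum_nonneg fun i _ => ?_
    rw [real_inner_smul_left]
    exact mul_nonneg (hc i) (hy (v i) (hv i))

lemma innerDualCone_closure (S : Set H) :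
    (closure S).innerDualCone = S.innerDualCone := by
  apply le_antisymm
  · exact fun y hy x hx => hy x (subset_closure hx)
  · intro y hy x hx
    have hcl : IsClosed {z : H | 0 ≤ ⟪z, y⟫_ℝ} := by
      have : {z : H | 0 ≤ ⟪z, y⟫_ℝ} = (fun z : H => ⟪z, y⟫_ℝ) ⁻¹' Set.Ici 0 := rfl
      rw [this]
      exact isClosed_Ici.preimage (continuous_id.inner continuous_const)
    exact hcl.closure_subset_iff.mpr (fun z hz => hy z hz) hx

lemma closure_conicalHull_eq [CompleteSpace H] (A : Set H) :
    closure (conicalHull A) =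
      (((A.innerDualCone : Set H)).innerDualCone : Set H) := by
  have hP : (coneOf A).Pointed := zero_mem_conicalHull A
  set C : ProperCone ℝ H := Submodule.closure ((coneOf A).toPointedCone hP) with hC
  have hCcoe : (C : Set H) = closure (conicalHull A) := rfl
  have hdd := ProperCone.innerDual_innerDual C
  have hdual : (ProperCone.innerDual (C : Set H) : Set H) = A.innerDualCone := by
    rw [hCcoe]
    show (closure (conicalHull A)).innerDualCone = _
    rw [innerDualCone_closure, innerDualCone_conicalHull]
  rw [← hCcoe, ← hdd, hdual]
  rfl

end Dual

variable {n : ℕ}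

noncomputable def snocEquiv (n : ℕ) : ((Fin n → ℝ) × ℝ) ≃ₗ[ℝ] (Fin (n+1) → ℝ) where
  toFun p := Fin.snoc p.1 p.2
  invFun y := (Fin.init y, y (Fin.last n))
  map_add' p q := by
    funext i
    refine Fin.lastCases ?_ ?_ i <;> simp
  map_smul' c p := by
    funext i
    refine Fin.lastCases ?_ ?_ i <;> simp
  left_inv p := by simp
  right_inv y := by simp

noncomputable def phiL (n : ℕ) : ((Fin n → ℝ) × ℝ) ≃ₗ[ℝ] EuclideanSpace ℝ (Fin (n+1)) :=
  (snocEquiv n).trans (WithLp.linearEquiv 2 ℝ (Fin (n+1) → ℝ)).symm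

lemma inner_phi (p : (Fin n → ℝ) × ℝ) (y : EuclideanSpace ℝ (Fin (n+1))) :
    ⟪(phiL n) p, y⟫_ℝ = ∑ j, p.1 j * y (Fin.castSucc j) + p.2 * y (Fin.last n) := by
  rw [PiLp.inner_apply]
  simp only [RCLike.inner_apply, conj_trivial]
  have happ : ∀ i, (phiL n p) i = (Fin.snoc p.1 p.2 : Fin (n+1) → ℝ) i := fun i => rfl
  simp only [happ]
  rw [Fin.sum_univ_castSucc]
  simp [Fin.snoc_castSucc, Fin.snoc_last, mul_comm]

def ISet (S : Set ((Fin n → ℝ) × ℝ)) : Set (Fin n → ℝ) :=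
  {x | ∀ p ∈ S, ∑ j, p.1 j * x j ≤ p.2}

lemma dset_mono {S₁ S₂ : Set ((Fin n → ℝ) × ℝ)}
    (h01 : ((0 : Fin n → ℝ), (1:ℝ)) ∈ S₁)
    (hne : (ISet S₁).Nonempty) (hsub : ISet S₁ ⊆ ISet S₂) :
    {y : EuclideanSpace ℝ (Fin (n+1)) | ∀ p ∈ S₁, 0 ≤ ⟪(phiL n) p, y⟫_ℝ} ⊆
      {y | ∀ p ∈ S₂, 0 ≤ ⟪(phiL n) p, y⟫_ℝ} := by
  intro y hy
  simp only [Set.mem_setOf_eq, inner_phi] at hy ⊢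
  set t : ℝ := y (Fin.last n) with htdef
  set x : Fin n → ℝ := fun j => y (Fin.castSucc j) with hxdef
  have ht0 : 0 ≤ t := by simpa using hy _ h01
  intro p hp
  rcases eq_or_lt_of_le ht0 with ht | ht
  · -- t = 0
    have hyp : ∀ q ∈ S₁, 0 ≤ ∑ j, q.1 j * x j := by
      intro q hq
      have h := hy q hq
      rw [← ht] at h
      simpa using h
    obtain ⟨w, hw⟩ := hne
    have hsum : ∀ (s : ℝ) (q : (Fin n → ℝ) × ℝ), ∑ j, q.1 j * (w j - s * x j)
        = (∑ j, q.1 j * w j) - s * ∑ j, q.1 j * x j := by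
      intro s q
      rw [Finset.mul_sum, ← Finset.sum_sub_distrib]
      exact Finset.sum_congr rfl fun j _ => by ring
    have hmem : ∀ s : ℝ, 0 ≤ s → (fun j => w j - s * x j) ∈ ISet S₁ := by
      intro s hs q hq
      show ∑ j, q.1 j * (w j - s * x j) ≤ q.2
      rw [hsum s q]
      have h2 : 0 ≤ s * ∑ j, q.1 j * x j := mul_nonneg hs (hyp q hq)
      have h3 := hw q hq
      linarith
    set B := ∑ j, p.1 j * x j with hB
    set W := ∑ j, p.1 j * w j with hW
    have key : ∀ s : ℝ, 0 ≤ s → W - s * B ≤ p.2 := by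
      intro s hs
      have h := hsub (hmem s hs) p hp
      have h' : ∑ j, p.1 j * (w j - s * x j) ≤ p.2 := h
      rwa [hsum s p] at h'
    have hBnn : 0 ≤ B := by
      by_contra hBneg
      push_neg at hBneg
      have hW2 : W ≤ p.2 := by simpa using key 0 le_rfl
      set s := (p.2 - W + 1) / (-B) with hs
      have hsnn : 0 ≤ s := div_nonneg (by linarith) (by linarith)
      have h3 := key s hsnn
      have h4 : s * (-B) = p.2 - W + 1 :=
        div_mul_cancel₀ _ (ne_of_gt (by linarith : (0:ℝ) < -B))
      have h5 : s * B = -(p.2 - W + 1) := by rw [← h4]; ring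
      linarith
    rw [← ht]
    simpa using hBnn
  · -- 0 < t
    set z : Fin n → ℝ := fun j => (-1/t) * x j with hz
    have hcomp : ∀ q : (Fin n → ℝ) × ℝ, ∑ j, q.1 j * z j = (-1/t) * ∑ j, q.1 j * x j := by
      intro q
      rw [Finset.mul_sum]
      exact Finset.sum_congr rfl fun j _ => by simp only [hz]; ring
    have hzI : z ∈ ISet S₁ := by
      intro q hq
      have h1 := hy q hq
      show ∑ j, q.1 j * z j ≤ q.2
      rw [hcomp q]
      have h2 : (-1/t) * (∑ j, q.1 j * x j) = -(∑ j, q.1 j * x j) / t := by ring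
      rw [h2, div_le_iff₀ ht]
      linarith
    have h3 := hsub hzI p hp
    have h3' : ∑ j, p.1 j * z j ≤ p.2 := h3
    rw [hcomp p] at h3'
    have h2 : (-1/t) * (∑ j, p.1 j * x j) = -(∑ j, p.1 j * x j) / t := by ring
    rw [h2, div_le_iff₀ ht] at h3'
    linarith

end ConeAux

open ConeAux in
/-- The closure `I(Ω)` is finitely generated (cut off by finitely many of the
inequalities in `Ω`) iff `cl cone(Ω)` is generated by a finite subset of `Ω`. -/
theorem finitely_generated_iff (n : ℕ) (Ω : Set ((Fin n → ℝ) × ℝ))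
    (h0 : ((0 : Fin n → ℝ), (1 : ℝ)) ∈ Ω)
    (hne : {x : Fin n → ℝ | ∀ p ∈ Ω, ∑ j, p.1 j * x j ≤ p.2}.Nonempty) :
    (∃ Ωbar : Set ((Fin n → ℝ) × ℝ), Ωbar ⊆ Ω ∧ Ωbar.Finite ∧
        {x : Fin n → ℝ | ∀ p ∈ Ωbar, ∑ j, p.1 j * x j ≤ p.2}
          = {x : Fin n → ℝ | ∀ p ∈ Ω, ∑ j, p.1 j * x j ≤ p.2}) ↔
      (∃ Ωbar : Set ((Fin n → ℝ) × ℝ), Ωbar ⊆ Ω ∧ Ωbar.Finite ∧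
        conicalHull Ωbar = closure (conicalHull Ω)) := by
  classical
  constructor
  · rintro ⟨Ωb, hsub, hfin, hIeq0⟩
    have hIeq : ISet Ωb = ISet Ω := hIeq0
    set Ω' : Set ((Fin n → ℝ) × ℝ) := insert ((0 : Fin n → ℝ), (1:ℝ)) Ωb with hΩ'
    have hsub' : Ω' ⊆ Ω := Set.insert_subset h0 hsub
    have hfin' : Ω'.Finite := hfin.insert _
    have h01' : ((0 : Fin n → ℝ), (1:ℝ)) ∈ Ω' := Set.mem_insert _ _
    have hIΩ' : ISet Ω' = ISet Ω := by
      apply Set.Subset.antisymm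
      · intro x hx
        have hxb : x ∈ ISet Ωb := fun q hq => hx q (Set.mem_insert_of_mem _ hq)
        rw [← hIeq]
        exact hxb
      · intro x hx q hq
        rcases Set.mem_insert_iff.mp hq with h | h
        · rw [h]
          simp
        · have hxb : x ∈ ISet Ωb := by rw [hIeq]; exact hx
          exact hxb q h
    have hneΩ : (ISet Ω).Nonempty := hne
    have hneΩ' : (ISet Ω').Nonempty := by rw [hIΩ']; exact hneΩ
    have hD : {y : EuclideanSpace ℝ (Fin (n+1)) | ∀ p ∈ Ω', 0 ≤ ⟪(phiL n) p, y⟫_ℝ}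
        = {y | ∀ p ∈ Ω, 0 ≤ ⟪(phiL n) p, y⟫_ℝ} :=
      Set.Subset.antisymm (dset_mono h01' hneΩ' (le_of_eq hIΩ'))
        (dset_mono h0 hneΩ (le_of_eq hIΩ'.symm))
    -- dual cones of images
    have hDual : ∀ S : Set ((Fin n → ℝ) × ℝ),
        (((phiL n) '' S).innerDualCone : Set (EuclideanSpace ℝ (Fin (n+1))))
          = {y | ∀ p ∈ S, 0 ≤ ⟪(phiL n) p, y⟫_ℝ} := by
      intro S
      ext y
      simp only [SetLike.mem_coe, mem_innerDualCone, Set.mem_setOf_eq, Set.forall_mem_image]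
    have hcc : ∀ S : Set ((Fin n → ℝ) × ℝ),
        closure (conicalHull ((phiL n) '' S)) =
          (({y : EuclideanSpace ℝ (Fin (n+1)) | ∀ p ∈ S, 0 ≤ ⟪(phiL n) p, y⟫_ℝ} :
            Set (EuclideanSpace ℝ (Fin (n+1)))).innerDualCone :
              Set (EuclideanSpace ℝ (Fin (n+1)))) := by
      intro S
      rw [closure_conicalHull_eq, hDual S]
    have hkey : closure (conicalHull ((phiL n) '' Ω')) = closure (conicalHull ((phiL n) '' Ω)) := by
      rw [hcc, hcc, hD]
    have hclosed : IsClosed (conicalHull ((phiL n) '' Ω')) :=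
      isClosed_conicalHull (hfin'.image _)
    have h1 : conicalHull ((phiL n) '' Ω') = closure (conicalHull ((phiL n) '' Ω)) := by
      rw [← hkey, hclosed.closure_eq]
    have h2 : ∀ S : Set ((Fin n → ℝ) × ℝ),
        conicalHull ((phiL n) '' S) = (phiL n) '' conicalHull S :=
      fun S => conicalHull_image (phiL n) S
    set φe : ((Fin n → ℝ) × ℝ) ≃L[ℝ] EuclideanSpace ℝ (Fin (n+1)) :=
      (phiL n).toContinuousLinearEquiv with hφe
    have hφcoe : ⇑φe = ⇑(phiL n) := LinearEquiv.coe_toContinuousLinearEquiv' _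
    have h3 : closure ((phiL n) '' conicalHull Ω) = (phiL n) '' closure (conicalHull Ω) := by
      rw [← hφcoe]
      have := φe.toHomeomorph.image_closure (conicalHull Ω)
      simpa using this.symm
    have h4 : (phiL n) '' conicalHull Ω' = (phiL n) '' closure (conicalHull Ω) := by
      rw [← h2, h1, h2, h3]
    exact ⟨Ω', hsub', hfin',
      Set.image_injective.mpr (phiL n).injective h4⟩
  · rintro ⟨Ωb, hsub, hfin, hcone⟩
    refine ⟨Ωb, hsub, hfin, ?_⟩
    apply Set.Subset.antisymm
    · intro x hx p hp
      have hpc : p ∈ conicalHull Ωb := by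
        rw [hcone]
        exact subset_closure (subset_conicalHull Ω hp)
      obtain ⟨k, c, q, hc, hq, hpeq⟩ := hpc
      have hp1 : ∀ j, p.1 j = ∑ i, c i * (q i).1 j := by
        intro j
        rw [hpeq, Prod.fst_sum, Finset.sum_apply]
        simp [Prod.smul_fst]
      have hp2 : p.2 = ∑ i, c i * (q i).2 := by
        rw [hpeq, Prod.snd_sum]
        simp [Prod.smul_snd]
      calc ∑ j, p.1 j * x j = ∑ j, ∑ i, (c i * (q i).1 j) * x j := by
            refine Finset.sum_congr rfl fun j _ => ?_
            rw [hp1 j, Finset.sum_mul]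
        _ = ∑ i, ∑ j, (c i * (q i).1 j) * x j := Finset.sum_comm
        _ = ∑ i, c i * ∑ j, (q i).1 j * x j := by
            refine Finset.sum_congr rfl fun i _ => ?_
            rw [Finset.mul_sum]
            exact Finset.sum_congr rfl fun j _ => by ring
        _ ≤ ∑ i, c i * (q i).2 :=
            Finset.sum_le_sum fun i _ =>
              mul_le_mul_of_nonneg_left (hx (q i) (hq i)) (hc i)
        _ = p.2 := hp2.symm
    · intro x hx p hp
      exact hx p (hsub hp)
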